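/- Let E be a finite-dimensional real inner product space, let f : E → ℝ be continuously differentiable, and suppose that every critical point of f is isolated in the set of critical points of f. Then for every complete gradient flow γ : ℝ → E of f whose image is bounded, there exist critical points p₋ and p₊ of f such that γ(t) → p₋ as t → −∞ and γ(t) → p₊ as t → +∞. -/

import Mathlib

open Filter Topology Set Metric

open Filter Topology Set Metric

private lemma aux_dec {g g' : ℝ → ℝ} (hg : ∀ t, HasDerivAt g (g' t) t)
    {a b c : ℝ} (hab : a ≤ b) (hc : ∀ t ∈ Set.Icc a b, g' t ≤ -c) :
    g b ≤ g a - c * (b - a) := by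
  have key : AntitoneOn (fun t => g t + c * t) (Set.Icc a b) := by
    refine antitoneOn_of_hasDerivWithinAt_nonpos (convex_Icc a b)
      (fun t _ => ((hg t).add ((hasDerivAt_id t).const_mul c)).continuousAt.continuousWithinAt)
      (fun t ht => (((hg t).add ((hasDerivAt_id t).const_mul c)).hasDerivWithinAt))
      (fun t ht => ?_)
    have := hc t (interior_subset ht)
    simp only [mul_one]
    linarith
  have := key (left_mem_Icc.mpr hab) (right_mem_Icc.mpr hab) hab
  simp only at this
  linarith

private lemma aux_sep {E : Type*} [MetricSpace E] {s : Set E} (hs : s.Finite) :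
    ∃ d > (0:ℝ), ∀ p ∈ s, ∀ q ∈ s, p ≠ q → 2 * d < dist p q := by
  classical
  set F : Finset (E × E) := (hs.toFinset ×ˢ hs.toFinset).filter (fun pq => pq.1 ≠ pq.2) with hF
  by_cases hne : F.Nonempty
  · refine ⟨F.inf' hne (fun pq => dist pq.1 pq.2) / 3, ?_, ?_⟩
    · have : ∀ pq ∈ F, 0 < dist pq.1 pq.2 := by
        intro pq hpq
        rw [hF, Finset.mem_filter] at hpq
        exact dist_pos.mpr hpq.2
      have := (Finset.lt_inf'_iff hne).mpr (fun pq hpq => this pq hpq)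
      positivity
    · intro p hp q hq hpq
      have hmem : (p, q) ∈ F := by
        rw [hF, Finset.mem_filter, Finset.mem_product]
        exact ⟨⟨hs.mem_toFinset.mpr hp, hs.mem_toFinset.mpr hq⟩, hpq⟩
      have h1 : F.inf' hne (fun pq => dist pq.1 pq.2) ≤ dist p q :=
        Finset.inf'_le _ hmem
      have h2 : 0 < dist p q := dist_pos.mpr hpq
      nlinarith [Finset.inf'_le (fun pq : E × E => dist pq.1 pq.2) hmem]
  · refine ⟨1, one_pos, fun p hp q hq hpq => absurd ?_ hne⟩
    refine ⟨(p, q), ?_⟩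
    rw [hF, Finset.mem_filter, Finset.mem_product]
    exact ⟨⟨hs.mem_toFinset.mpr hp, hs.mem_toFinset.mpr hq⟩, hpq⟩

private lemma aux_main {E : Type*} [NormedAddCommGroup E] [InnerProductSpace ℝ E]
    [FiniteDimensional ℝ E]
    (f : E → ℝ) (hf : ContDiff ℝ 1 f)
    (hiso : ∀ p : E, gradient f p = 0 →
      ∃ ε > (0 : ℝ), ∀ q : E, gradient f q = 0 → dist q p < ε → q = p)
    (γ : ℝ → E) (hγ : ∀ t : ℝ, HasDerivAt γ (-(gradient f (γ t))) t)
    (hbdd : Bornology.IsBounded (Set.range γ)) :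
    ∃ p : E, gradient f p = 0 ∧ Tendsto γ atTop (𝓝 p) := by
  have hdf : Differentiable ℝ f := hf.differentiable one_ne_zero
  have cgrad : Continuous (gradient f) := by
    show Continuous fun x => (InnerProductSpace.toDual ℝ E).symm (fderiv ℝ f x)
    exact (InnerProductSpace.toDual ℝ E).symm.continuous.comp (hf.continuous_fderiv one_ne_zero)
  have contγ : Continuous γ := by
    rw [continuous_iff_continuousAt]; exact fun t => (hγ t).continuousAt
  set K := closure (Set.range γ) with hK
  have hKc : IsCompact K := isCompact_of_isClosed_isBounded isClosed_closure hbdd.closure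
  have hγK : ∀ t, γ t ∈ K := fun t => subset_closure (Set.mem_range_self t)
  -- bound on the gradient along the flow
  obtain ⟨x₁, -, hM'⟩ := hKc.exists_isMaxOn ⟨γ 0, hγK 0⟩
    ((continuous_norm.comp cgrad).continuousOn)
  have hM : ∀ x ∈ K, ‖gradient f x‖ ≤ ‖gradient f x₁‖ := fun x hx => hM' hx
  set M := ‖gradient f x₁‖ with hMdef
  -- Lipschitz estimate
  have lip : ∀ s t : ℝ, dist (γ s) (γ t) ≤ M * |s - t| := by
    intro s t
    have := convex_univ.norm_image_sub_le_of_norm_hasDerivWithin_le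
      (f := γ) (f' := fun u => -(gradient f (γ u))) (C := M)
      (fun u _ => (hγ u).hasDerivWithinAt)
      (fun u _ => by simpa using hM (γ u) (hγK u)) (Set.mem_univ t) (Set.mem_univ s)
    simpa [dist_eq_norm, Real.norm_eq_abs] using this
  -- the energy function
  set g : ℝ → ℝ := fun t => f (γ t) with hgdef
  have hg : ∀ t, HasDerivAt g (-‖gradient f (γ t)‖ ^ 2) t := by
    intro t
    have h1 : HasFDerivAt f (InnerProductSpace.toDual ℝ E (gradient f (γ t))) (γ t) :=
      (hdf (γ t)).hasGradientAt.hasFDerivAt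
    have := h1.comp_hasDerivAt t (hγ t)
    rw [map_neg, InnerProductSpace.toDual_apply_apply, real_inner_self_eq_norm_sq] at this
    exact this
  have hganti : Antitone g :=
    antitone_of_deriv_nonpos (fun t => (hg t).differentiableAt)
      (fun t => by rw [(hg t).deriv]; exact neg_nonpos.mpr (sq_nonneg _))
  -- lower bound
  obtain ⟨x₀, -, hx₀'⟩ := hKc.exists_isMinOn ⟨γ 0, hγK 0⟩ hf.continuous.continuousOn
  have hx₀ : ∀ x ∈ K, f x₀ ≤ f x := fun x hx => hx₀' hx
  have hbb : BddBelow (Set.range g) := ⟨f x₀, by rintro y ⟨t, rfl⟩; exact hx₀ (γ t) (hγK t)⟩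
  set c := ⨅ t, g t with hc
  have hgc : Tendsto g atTop (𝓝 c) := tendsto_atTop_ciInf hganti hbb
  have hgec : ∀ t, c ≤ g t := fun t => ciInf_le hbb t
  -- the omega-limit set
  set Ω : Set E := {q | MapClusterPt q atTop γ} with hΩ
  have hmapK : ∀ (F : Filter ℝ), Filter.map γ F ≤ 𝓟 K := fun F =>
    Filter.le_principal_iff.mpr (Filter.mem_map.mpr (Filter.univ_mem' fun t => hγK t))
  obtain ⟨q₀, hq₀K, hq₀⟩ := hKc.exists_mapClusterPt (hmapK atTop)
  have hΩne : q₀ ∈ Ω := hq₀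
  have hΩK : Ω ⊆ K := by
    intro q hq
    have h1 : Filter.map γ atTop ≤ 𝓟 K := hmapK atTop
    have h2 : ClusterPt q (𝓟 K) := ClusterPt.mono hq h1
    have h3 : q ∈ closure K := mem_closure_iff_clusterPt.mpr h2
    rwa [isClosed_closure.closure_eq] at h3
  have hΩclosed : IsClosed Ω := isClosed_setOf_clusterPt
  -- every omega-limit point is critical
  have crit : ∀ q ∈ Ω, gradient f q = 0 := by
    intro q hq
    by_contra hcrit
    set a := ‖gradient f q‖ with hadef
    have ha : 0 < a := norm_pos_iff.mpr hcrit
    -- a neighborhood where the gradient is large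
    obtain ⟨δ, hδ, hball⟩ : ∃ δ > (0:ℝ), ∀ x, dist x q < δ → a / 2 ≤ ‖gradient f x‖ := by
      have hopen : IsOpen {x : E | a / 2 < ‖gradient f x‖} :=
        isOpen_lt continuous_const (continuous_norm.comp cgrad)
      have hqmem : q ∈ {x : E | a / 2 < ‖gradient f x‖} := by
        simp only [Set.mem_setOf_eq, ← hadef]; linarith
      obtain ⟨δ, hδ, hsub⟩ := Metric.isOpen_iff.mp hopen q hqmem
      exact ⟨δ, hδ, fun x hx => le_of_lt (hsub hx)⟩
    set τ := δ / (2 * (M + 1)) with hτdef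
    have hM0 : 0 ≤ M := norm_nonneg _
    have hτ : 0 < τ := by positivity
    have hMτ : M * τ < δ / 2 := by
      have h1 : M * τ = (M * δ) / (2 * (M + 1)) := by rw [hτdef]; ring
      rw [h1, div_lt_div_iff₀ (by positivity) (by norm_num)]
      nlinarith
    -- decrease estimate
    have hdec : ∀ t, dist (γ t) q < δ / 2 → g (t + τ) ≤ g t - (a / 2) ^ 2 * τ := by
      intro t ht
      have key : ∀ s ∈ Set.Icc t (t + τ), -‖gradient f (γ s)‖ ^ 2 ≤ -((a / 2) ^ 2) := by
        intro s hs
        have hdist : dist (γ s) q < δ := by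
          have h1 : dist (γ s) (γ t) ≤ M * |s - t| := lip s t
          have h2 : |s - t| ≤ τ := by
            rw [abs_le]; constructor <;> [linarith [hs.1]; linarith [hs.2]]
          have h3 : M * |s - t| ≤ M * τ := by nlinarith [abs_nonneg (s - t)]
          calc dist (γ s) q ≤ dist (γ s) (γ t) + dist (γ t) q := dist_triangle _ _ _
            _ < M * τ + δ / 2 := by linarith
            _ < δ := by linarith
        have := hball (γ s) hdist
        have h4 : (a / 2) ^ 2 ≤ ‖gradient f (γ s)‖ ^ 2 := by nlinarith [norm_nonneg (gradient f (γ s))]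
        linarith
      have := aux_dec hg (by linarith : t ≤ t + τ) key
      simpa using this
    -- g is eventually close to c
    have hev : ∀ᶠ t in atTop, g t < c + (a / 2) ^ 2 * τ := by
      have hpos : (0:ℝ) < (a / 2) ^ 2 * τ := by positivity
      have := hgc (Iio_mem_nhds (by linarith : c < c + (a / 2) ^ 2 * τ))
      exact this
    rw [Filter.eventually_atTop] at hev
    obtain ⟨t₀, ht₀⟩ := hev
    -- γ is frequently in the ball around q
    have hfreq : ∃ᶠ t in atTop, γ t ∈ Metric.ball q (δ / 2) :=
      mapClusterPt_iff_frequently.mp hq _ (Metric.ball_mem_nhds q (by linarith))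
    obtain ⟨t, ht, htball⟩ := (Filter.frequently_atTop.mp hfreq) t₀
    have h5 : g (t + τ) ≤ g t - (a / 2) ^ 2 * τ := hdec t (by simpa [Metric.mem_ball] using htball)
    have h6 : g t < c + (a / 2) ^ 2 * τ := ht₀ t ht
    have h7 : c ≤ g (t + τ) := hgec (t + τ)
    linarith
  -- Ω is compact and finite
  have hΩcomp : IsCompact Ω := hKc.of_isClosed_subset hΩclosed hΩK
  have hΩfin : Ω.Finite := by
    choose! ε hε hεiso using fun (p : E) (hp : p ∈ Ω) => hiso p (crit p hp)
    obtain ⟨s, hs⟩ := hΩcomp.elim_finite_subcover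
      (fun p : Ω => Metric.ball (p : E) (ε p))
      (fun p => Metric.isOpen_ball)
      (fun q hq => Set.mem_iUnion.mpr ⟨⟨q, hq⟩, Metric.mem_ball_self (hε q hq)⟩)
    refine Set.Finite.subset ((s.finite_toSet.image (fun p : Ω => (p : E))) : (Set.image (fun p : Ω => (p : E)) ↑s).Finite) ?_
    intro q hq
    obtain ⟨p, hps, hqball⟩ := Set.mem_iUnion₂.mp (hs hq)
    have hq' : q = (p : E) := hεiso (p : E) p.2 q (crit q hq) (Metric.mem_ball.mp hqball)
    exact ⟨p, hps, hq'.symm⟩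
  -- γ is eventually close to Ω
  have hclose : ∀ ε > (0:ℝ), ∀ᶠ t in atTop, ∃ p ∈ Ω, dist (γ t) p < ε := by
    intro ε hε
    by_contra hcon
    rw [Filter.not_eventually] at hcon
    have hcon' : ∃ᶠ t in atTop, ∀ p ∈ Ω, ε ≤ dist (γ t) p := by
      refine hcon.mono fun t ht => ?_
      push_neg at ht
      exact fun p hp => ht p hp
    rw [Filter.frequently_iff_neBot] at hcon'
    haveI := hcon'
    set F := atTop ⊓ 𝓟 {t | ∀ p ∈ Ω, ε ≤ dist (γ t) p} with hF
    obtain ⟨q, hqK, hq⟩ := hKc.exists_mapClusterPt (hmapK F)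
    have hqΩ : q ∈ Ω := hq.mono inf_le_left
    have hfr : ∃ᶠ t in F, γ t ∈ Metric.ball q ε :=
      mapClusterPt_iff_frequently.mp hq _ (Metric.ball_mem_nhds q hε)
    have hevS : ∀ᶠ t in F, ∀ p ∈ Ω, ε ≤ dist (γ t) p :=
      Filter.eventually_inf_principal.mpr (Filter.Eventually.of_forall fun t ht => ht)
    obtain ⟨t, htb, htS⟩ := (hfr.and_eventually hevS).exists
    exact absurd (Metric.mem_ball.mp htb) (not_lt.mpr (htS q hqΩ))
  -- separation of the finitely many limit points
  obtain ⟨d, hd, hsep⟩ := aux_sep hΩfin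
  obtain ⟨T, hT⟩ := Filter.eventually_atTop.mp (hclose d hd)
  obtain ⟨p₀, hp₀Ω, hp₀⟩ := hT T le_rfl
  -- γ stays in the ball around p₀
  have hall : ∀ t, T ≤ t → dist (γ t) p₀ < d := by
    haveI hpre : PreconnectedSpace (Set.Ici T) := Subtype.preconnectedSpace isPreconnected_Ici
    set A : Set (Set.Ici T) := {t | dist (γ (t : ℝ)) p₀ < d} with hA
    have hcont : Continuous fun t : Set.Ici T => dist (γ (t : ℝ)) p₀ :=
      (contγ.comp continuous_subtype_val).dist continuous_const
    have hopen : IsOpen A := isOpen_Iio.preimage hcont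
    have hclosedA : IsClosed A := by
      rw [← isOpen_compl_iff]
      have hcompl : Aᶜ = {t : Set.Ici T | d < dist (γ (t : ℝ)) p₀} := by
        ext t
        simp only [Set.mem_compl_iff, hA, Set.mem_setOf_eq, not_lt]
        constructor
        · intro hle
          obtain ⟨p, hpΩ, hp⟩ := hT t t.2
          have hne : p ≠ p₀ := by rintro rfl; exact absurd hp (not_lt.mpr hle)
          have hdd := hsep p hpΩ p₀ hp₀Ω hne
          have htri := dist_triangle p (γ (t:ℝ)) p₀
          rw [dist_comm p (γ (t:ℝ))] at htri
          linarith
        · intro h; linarith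
      rw [hcompl]
      exact isOpen_Ioi.preimage hcont
    have hne : A.Nonempty := ⟨⟨T, Set.self_mem_Ici⟩, hp₀⟩
    have huniv : A = Set.univ := IsClopen.eq_univ ⟨hclosedA, hopen⟩ hne
    intro t ht
    have hmem : (⟨t, ht⟩ : Set.Ici T) ∈ A := huniv ▸ Set.mem_univ _
    exact hmem
  -- conclusion
  refine ⟨p₀, crit p₀ hp₀Ω, ?_⟩
  rw [Metric.tendsto_atTop]
  intro ε hε
  obtain ⟨T', hT'⟩ := Filter.eventually_atTop.mp (hclose (min ε d) (lt_min hε hd))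
  refine ⟨max T T', fun t ht => ?_⟩
  obtain ⟨p, hpΩ, hp⟩ := hT' t (le_trans (le_max_right _ _) ht)
  have h1 : dist (γ t) p₀ < d := hall t (le_trans (le_max_left _ _) ht)
  have hpp : p = p₀ := by
    by_contra hne
    have hdd := hsep p hpΩ p₀ hp₀Ω hne
    have htri := dist_triangle p (γ t) p₀
    rw [dist_comm p (γ t)] at htri
    have h2 : dist (γ t) p < d := lt_of_lt_of_le hp (min_le_right _ _)
    linarith
  rw [hpp] at hp
  exact lt_of_lt_of_le hp (min_le_left _ _)

/-- Let `E` be a finite-dimensional real inner product space and `f : E → ℝ` be `C¹`,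
with every critical point of `f` isolated in the set of critical points.  Then every
complete gradient flow `γ : ℝ → E` of `f` with bounded image has well-defined
end-points: there exist critical points `p₋` and `p₊` of `f` with `γ t → p₋` as
`t → -∞` and `γ t → p₊` as `t → +∞`. -/
theorem stmt_8 {E : Type*} [NormedAddCommGroup E] [InnerProductSpace ℝ E]
    [FiniteDimensional ℝ E]
    (f : E → ℝ) (hf : ContDiff ℝ 1 f)
    (hiso : ∀ p : E, gradient f p = 0 →
      ∃ ε > (0 : ℝ), ∀ q : E, gradient f q = 0 → dist q p < ε → q = p)
    (γ : ℝ → E) (hγ : ∀ t : ℝ, HasDerivAt γ (-(gradient f (γ t))) t)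
    (hbdd : Bornology.IsBounded (Set.range γ)) :
    ∃ pminus pplus : E, gradient f pminus = 0 ∧ gradient f pplus = 0 ∧
      Filter.Tendsto γ Filter.atBot (nhds pminus) ∧
      Filter.Tendsto γ Filter.atTop (nhds pplus) := by
  obtain ⟨pplus, hpc, hpt⟩ := aux_main f hf hiso γ hγ hbdd
  -- time-reversed flow for the negated function
  set f' : E → ℝ := fun x => -f x with hf'def
  have gradneg : ∀ x, gradient f' x = -gradient f x := by
    intro x
    show (InnerProductSpace.toDual ℝ E).symm (fderiv ℝ (fun y => -f y) x)
      = -(InnerProductSpace.toDual ℝ E).symm (fderiv ℝ f x)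
    rw [fderiv_fun_neg]
    exact map_neg _ _
  set γ' : ℝ → E := fun t => γ (-t) with hγ'def
  have hγ' : ∀ t : ℝ, HasDerivAt γ' (-(gradient f' (γ' t))) t := by
    intro t
    have h1 : HasDerivAt (fun s : ℝ => -s) (-1 : ℝ) t := hasDerivAt_neg t
    have h2 := (hγ (-t)).scomp t h1
    have h3 : (-1 : ℝ) • (-(gradient f (γ (-t)))) = -(gradient f' (γ' t)) := by
      rw [hγ'def]; simp [gradneg]
    rw [h3] at h2
    exact h2
  have hiso' : ∀ p : E, gradient f' p = 0 →
      ∃ ε > (0 : ℝ), ∀ q : E, gradient f' q = 0 → dist q p < ε → q = p := by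
    intro p hp
    rw [gradneg, neg_eq_zero] at hp
    obtain ⟨ε, hε, hq⟩ := hiso p hp
    exact ⟨ε, hε, fun q hq' hd => hq q (by rwa [gradneg, neg_eq_zero] at hq') hd⟩
  have hbdd' : Bornology.IsBounded (Set.range γ') := by
    refine hbdd.subset ?_
    rintro x ⟨t, rfl⟩
    exact Set.mem_range_self (-t)
  obtain ⟨pminus, hmc, hmt⟩ := aux_main f' (hf.neg) hiso' γ' hγ' hbdd'
  refine ⟨pminus, pplus, ?_, hpc, ?_, hpt⟩
  · rw [gradneg, neg_eq_zero] at hmc; exact hmc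
  · have := hmt.comp tendsto_neg_atBot_atTop
    have heq : γ' ∘ (Neg.neg : ℝ → ℝ) = γ := by funext t; simp [hγ'def]
    rwa [heq] at this
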